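/- Every perfect ideal of a Lie algebra L (an ideal I with [I,I] = I) is invariant under every Leibniz-derivation of L. -/

import Mathlib

open Finset

/-- Right-nested bracket `[x₁,[x₂,…,[x_k,x_{k+1}]…]]` of a list of elements. -/
def nestedBracket {L : Type*} [LieRing L] : List L → L
  | [] => 0
  | [x] => x
  | x :: xs => ⁅x, nestedBracket xs⁆

/-- A Leibniz-derivation of order `k` of a Lie algebra. -/
def IsLeibnizDerivation {F L : Type*} [CommRing F] [LieRing L] [LieAlgebra F L] (k : ℕ)
    (P : L →ₗ[F] L) : Prop :=
  ∀ x : Fin (k + 1) → L,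
    P (nestedBracket (List.ofFn x)) =
      ∑ i : Fin (k + 1), nestedBracket (List.ofFn (Function.update x i (P (x i))))

lemma nestedBracket_cons {L : Type*} [LieRing L] (x : L) (l : List L) (h : l ≠ []) :
    nestedBracket (x :: l) = ⁅x, nestedBracket l⁆ := by
  cases l with
  | nil => exact absurd rfl h
  | cons y ys => rfl

/-- A nested bracket of a nonempty list with at least one element in an ideal lies in the
ideal. -/
lemma nestedBracket_mem {F L : Type*} [Field F] [LieRing L] [LieAlgebra F L]
    (I : LieIdeal F L) : ∀ (l : List L), l ≠ [] → (∃ a ∈ l, a ∈ I) → nestedBracket l ∈ I := by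
  intro l
  induction l with
  | nil => intro h; exact absurd rfl h
  | cons x xs ih =>
    rintro - ⟨a, ha, haI⟩
    rw [List.mem_cons] at ha
    rcases List.eq_nil_or_concat xs with rfl | hne
    · rcases ha with rfl | h
      · simpa [nestedBracket] using haI
      · simp at h
    have hxs : xs ≠ [] := by rintro rfl; obtain ⟨L', b, h⟩ := hne; simp at h
    rw [nestedBracket_cons x xs hxs]
    rcases ha with h | h
    · subst h
      exact lie_mem_left F L I a (nestedBracket xs) haI
    · exact I.lie_mem (ih hxs ⟨a, h, haI⟩)

theorem perfect_ideal_invariant_under_leibnizDerivation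
    {F L : Type*} [Field F] [CharZero F] [LieRing L] [LieAlgebra F L]
    (I : LieIdeal F L) (hI : ⁅I, I⁆ = I)
    {k : ℕ} (hk : 1 ≤ k) (P : L →ₗ[F] L) (hP : IsLeibnizDerivation k P) :
    ∀ x ∈ I, P x ∈ I := by
  -- the set of nested brackets of length n+1 with all entries in I
  set s : ℕ → Set L := fun n =>
    {z | ∃ y : Fin (n + 1) → L, (∀ i, y i ∈ I) ∧ nestedBracket (List.ofFn y) = z} with hs
  -- Claim 1 : I ≤ span of s n for all n
  have claim1 : ∀ n, ∀ x ∈ I, x ∈ Submodule.span F (s n) := by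
    intro n
    induction n with
    | zero =>
      intro x hx
      apply Submodule.subset_span
      exact ⟨![x], fun i => by fin_cases i; simpa using hx, by simp [nestedBracket]⟩
    | succ n ihn =>
      intro x hx
      have hx' : x ∈ Submodule.span F {m | ∃ a ∈ I, ∃ b ∈ I, ⁅a, b⁆ = m} := by
        rw [← LieSubmodule.lieIdeal_oper_eq_linear_span']
        exact (LieSubmodule.mem_toSubmodule _).mpr (by rw [hI]; exact hx)
      refine Submodule.span_induction ?_ (Submodule.zero_mem _)
        (fun a b _ _ ha hb => Submodule.add_mem _ ha hb)
        (fun c a _ ha => Submodule.smul_mem _ c ha) hx'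
      rintro m ⟨a, haI, b, hbI, rfl⟩
      have hb : b ∈ Submodule.span F (s n) := ihn b hbI
      refine Submodule.span_induction (p := fun b _ => ⁅a, b⁆ ∈ Submodule.span F (s (n + 1)))
        ?_ (by simp) (fun u v _ _ hu hv => by
          show ⁅a, u + v⁆ ∈ Submodule.span F (s (n + 1))
          rw [lie_add]; exact Submodule.add_mem _ hu hv)
        (fun c u _ hu => by
          show ⁅a, c • u⁆ ∈ Submodule.span F (s (n + 1))
          rw [lie_smul]; exact Submodule.smul_mem _ c hu) hb
      rintro w ⟨y, hyI, rfl⟩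
      apply Submodule.subset_span
      refine ⟨Fin.cons a y, ?_, ?_⟩
      · intro i
        refine Fin.cases ?_ ?_ i
        · simpa using haI
        · intro j; simpa using hyI j
      · have h1 : List.ofFn (Fin.cons a y) = a :: List.ofFn y := by
          rw [List.ofFn_succ]
          simp
        rw [h1, nestedBracket_cons a _ (by simp [← List.length_pos_iff_ne_nil])]
  -- Claim 2 : P maps generators of s k into I
  have claim2 : ∀ z ∈ s k, P z ∈ I := by
    rintro z ⟨y, hyI, rfl⟩
    rw [hP y]
    refine sum_mem fun i _ => ?_
    apply nestedBracket_mem I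
    · simp [← List.length_pos_iff_ne_nil]
    · -- pick j ≠ i; then the j-th entry is y j ∈ I
      haveI : Nontrivial (Fin (k + 1)) := Fin.nontrivial_iff_two_le.mpr (by omega)
      obtain ⟨j, hj⟩ := exists_ne i
      refine ⟨y j, ?_, hyI j⟩
      have : Function.update y i (P (y i)) j = y j := Function.update_of_ne hj _ _
      rw [← this]
      exact List.mem_ofFn.mpr ⟨j, rfl⟩
  -- Combine
  intro x hx
  have hxs : x ∈ Submodule.span F (s k) := claim1 k x hx
  refine Submodule.span_induction claim2 (by simp) ?_ ?_ hxs
  · intro a b _ _ ha hb; rw [map_add]; exact add_mem ha hb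
  · intro c a _ ha; rw [map_smul]; exact I.smul_mem c ha
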